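/- Let B be a 2-finite matrix. Then for any distinct indices i, j, k, one has b_{ij} b_{jk} b_{ki} = - b_{ji} b_{kj} b_{ik}. Moreover, in every triangle of the diagram of B (three vertices pairwise joined by edges) the multiset of edge weights |b_{xy} b_{yx}| is either {1,1,1} or {2,2,1}. -/

import Mathlib

/-- Matrix mutation in direction `k` for integer matrices. -/
def mutZ {n : ℕ} (k : Fin n) (B : Matrix (Fin n) (Fin n) ℤ) : Matrix (Fin n) (Fin n) ℤ :=
  Matrix.of fun i j =>
    if i = k ∨ j = k then -B i j
    else B i j + (|B i k| * B k j + B i k * |B k j|) / 2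

/-- Sign-skew-symmetry for integer matrices. -/
def SignSkewSymmetric {n : ℕ} (B : Matrix (Fin n) (Fin n) ℤ) : Prop :=
  ∀ i j, (B i j = 0 ∧ B j i = 0) ∨ B i j * B j i < 0

/-- An integer matrix is 2-finite if every matrix obtained from it by a finite
sequence of mutations is sign-skew-symmetric with `|b'_ij b'_ji| ≤ 3`. -/
def TwoFinite {n : ℕ} (B : Matrix (Fin n) (Fin n) ℤ) : Prop :=
  ∀ l : List (Fin n),
    SignSkewSymmetric (l.foldl (fun M k => mutZ k M) B) ∧
    ∀ i j, |(l.foldl (fun M k => mutZ k M) B) i j *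
            (l.foldl (fun M k => mutZ k M) B) j i| ≤ 3

/- ### Auxiliary machinery -/

/-- The list of allowed (b_ij, b_ji) pairs in a 2-finite matrix. -/
def pl : List (ℤ × ℤ) :=
  [(0,0), (-3,1), (-2,1), (-1,1), (-1,2), (-1,3), (1,-3), (1,-2), (1,-1), (2,-1), (3,-1)]

/-- Goodness of a 3×3 matrix: sign-skew-symmetric with weights ≤ 3. -/
abbrev GoodM (M : Matrix (Fin 3) (Fin 3) ℤ) : Prop :=
  ∀ p q : Fin 3, ((M p q = 0 ∧ M q p = 0) ∨ M p q * M q p < 0) ∧ |M p q * M q p| ≤ 3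

/-- The desired conclusion, in terms of the six off-diagonal entries. -/
abbrev Concl (a ap b bp c cp : ℤ) : Prop :=
  a * b * c = -(ap * bp * cp) ∧ (a ≠ 0 → b ≠ 0 → cp ≠ 0 →
    (|a*ap| = 1 ∧ |b*bp| = 1 ∧ |cp*c| = 1) ∨
    (|a*ap| = 2 ∧ |b*bp| = 2 ∧ |cp*c| = 1) ∨
    (|a*ap| = 2 ∧ |b*bp| = 1 ∧ |cp*c| = 2) ∨
    (|a*ap| = 1 ∧ |b*bp| = 2 ∧ |cp*c| = 2))

/-- Build the 3×3 matrix from the six off-diagonal entries. -/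
abbrev mk3 (a ap b bp c cp : ℤ) : Matrix (Fin 3) (Fin 3) ℤ :=
  !![0, a, cp; ap, 0, b; c, bp, 0]

lemma mem_pl (x y : ℤ) (h : (x = 0 ∧ y = 0) ∨ x * y < 0) (hb : |x * y| ≤ 3) :
    (x, y) ∈ pl := by
  rcases h with ⟨hx, hy⟩ | h
  · subst hx; subst hy; decide
  · have hx0 : x ≠ 0 := by rintro rfl; simp at h
    have hy0 : y ≠ 0 := by rintro rfl; simp at h
    have h1 : 1 ≤ |y| := Int.one_le_abs hy0
    have h1x : 1 ≤ |x| := Int.one_le_abs hx0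
    have hxy : |x| * |y| ≤ 3 := by rw [← abs_mul]; exact hb
    have hx3 : |x| ≤ 3 := le_trans (le_mul_of_one_le_right (abs_nonneg x) h1) hxy
    have hy3 : |y| ≤ 3 := le_trans (le_mul_of_one_le_left (abs_nonneg y) h1x) hxy
    have hx3' := abs_le.mp hx3
    have hy3' := abs_le.mp hy3
    obtain ⟨hx1, hx2⟩ := hx3'
    obtain ⟨hy1, hy2⟩ := hy3'
    interval_cases x <;> interval_cases y <;> revert h hb <;> decide

instance instDecGoodM (M : Matrix (Fin 3) (Fin 3) ℤ) : Decidable (GoodM M) :=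
  @Fintype.decidableForallFintype (Fin 3) _ (fun _ => @Fintype.decidableForallFintype (Fin 3) _ (fun _ => inferInstance) _) _

set_option synthInstance.maxSize 8000 in
set_option maxHeartbeats 4000000 in
lemma core : ∀ p ∈ pl, ∀ q ∈ pl, ∀ r ∈ pl,
    Concl p.1 p.2 q.1 q.2 r.1 r.2 ∨
    ¬ GoodM (mutZ 0 (mk3 p.1 p.2 q.1 q.2 r.1 r.2)) ∨
    ¬ GoodM (mutZ 1 (mk3 p.1 p.2 q.1 q.2 r.1 r.2)) ∨
    ¬ GoodM (mutZ 2 (mk3 p.1 p.2 q.1 q.2 r.1 r.2)) := by decide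

lemma submatrix_mutZ {n : ℕ} (B : Matrix (Fin n) (Fin n) ℤ) (e : Fin 3 → Fin n)
    (he : Function.Injective e) (t : Fin 3) :
    (mutZ (e t) B).submatrix e e = mutZ t (B.submatrix e e) := by
  ext p q
  simp only [Matrix.submatrix_apply, mutZ, Matrix.of_apply, he.eq_iff]

/-- For a 2-finite matrix `B` and distinct indices `i, j, k`, one has
`b_ij b_jk b_ki = - b_ji b_kj b_ik`; moreover, if `i, j, k` are pairwise joined
by edges in the diagram of `B`, the multiset of edge weights `|b_xy b_yx|` of the
triangle is either `{1,1,1}` or `{2,2,1}`. -/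
theorem two_finite_triangle_weights {n : ℕ} (B : Matrix (Fin n) (Fin n) ℤ)
    (h2f : TwoFinite B) (i j k : Fin n)
    (hij : i ≠ j) (hik : i ≠ k) (hjk : j ≠ k) :
    B i j * B j k * B k i = -(B j i * B k j * B i k) ∧
    ((B i j ≠ 0 ∧ B j k ≠ 0 ∧ B i k ≠ 0) →
      ({|B i j * B j i|, |B j k * B k j|, |B i k * B k i|} : Multiset ℤ) = {1, 1, 1} ∨
      ({|B i j * B j i|, |B j k * B k j|, |B i k * B k i|} : Multiset ℤ) = {2, 2, 1}) := by
  set e : Fin 3 → Fin n := ![i, j, k] with he_def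
  have he : Function.Injective e := by
    intro p q hpq
    fin_cases p <;> fin_cases q <;> simp_all [he_def] <;>
      first
        | rfl
        | exact absurd hpq hij | exact absurd hpq hik | exact absurd hpq hjk
        | exact absurd hpq.symm hij | exact absurd hpq.symm hik | exact absurd hpq.symm hjk
  have h0 := h2f []
  simp only [List.foldl_nil] at h0
  have hdiag : ∀ x, B x x = 0 := by
    intro x
    rcases h0.1 x x with ⟨h, _⟩ | h
    · exact h
    · exact absurd h (mul_self_nonneg (B x x)).not_gt
  set S : Matrix (Fin 3) (Fin 3) ℤ := B.submatrix e e with hS_def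
  have hSmk : S = mk3 (B i j) (B j i) (B j k) (B k j) (B k i) (B i k) := by
    ext p q
    fin_cases p <;> fin_cases q <;>
      simp [hS_def, he_def, Matrix.submatrix_apply, hdiag]
  have hGood : ∀ t : Fin 3, GoodM (mutZ t S) := by
    intro t
    have h1 := h2f [e t]
    simp only [List.foldl_cons, List.foldl_nil] at h1
    have key : ∀ p q : Fin 3, (mutZ t S) p q = (mutZ (e t) B) (e p) (e q) := by
      intro p q
      rw [hS_def, ← submatrix_mutZ B e he t]
      rfl
    intro p q
    rw [key, key]
    exact ⟨h1.1 (e p) (e q), h1.2 (e p) (e q)⟩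
  have hp : (B i j, B j i) ∈ pl := mem_pl _ _ (h0.1 i j) (h0.2 i j)
  have hq : (B j k, B k j) ∈ pl := mem_pl _ _ (h0.1 j k) (h0.2 j k)
  have hr : (B k i, B i k) ∈ pl := mem_pl _ _ (h0.1 k i) (h0.2 k i)
  have hcore := core _ hp _ hq _ hr
  simp only at hcore
  rw [← hSmk] at hcore
  rcases hcore with hc | hbad | hbad | hbad
  · obtain ⟨h1, h2⟩ := hc
    refine ⟨h1, ?_⟩
    rintro ⟨ha, hb, hcp⟩
    rcases h2 ha hb hcp with ⟨e1, e2, e3⟩ | ⟨e1, e2, e3⟩ | ⟨e1, e2, e3⟩ | ⟨e1, e2, e3⟩ <;>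
      rw [show |B i k * B k i| = |B i k| * |B k i| from abs_mul _ _,
          show (|B i k| * |B k i| : ℤ) = |B i k * B k i| from (abs_mul _ _).symm] <;>
      rw [mul_comm (B i k) (B k i)] at * <;>
      rw [e1, e2, e3] <;> [left; right; right; right] <;> decide
  all_goals exact absurd (hGood _) hbad
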